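/- There exists an absolute constant c > 0 such that for every prime power q, all nonempty subsets A₁, A₂ ⊆ F_q^* and every nonempty subset A₃ ⊆ F_q, one has max(|A₁·A₂|, |A₁ + A₃|) ≥ c · min(√(|A₁|·q), √(|A₁|²·|A₂|·|A₃|/q)). -/

import Mathlib

open scoped Pointwise

section GaraevAux
namespace GaraevAux
open Finset
open scoped BigOperators


set_option linter.unusedSectionVars false
set_option maxHeartbeats 1000000

variable {F : Type*} [Field F] [Fintype F] [DecidableEq F]

noncomputable def ψ (F : Type*) [Field F] [Fintype F] : AddChar F ℂ :=
  AddChar.FiniteField.primitiveChar_to_Complex F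

lemma ψ_prim (F : Type*) [Field F] [Fintype F] : (ψ F).IsPrimitive :=
  AddChar.FiniteField.primitiveChar_to_Complex_isPrimitive F

lemma ψ_sum (b : F) : ∑ x : F, ψ F (x * b) = if b = 0 then (Fintype.card F : ℂ) else 0 := by
  simpa using AddChar.sum_mulShift b (ψ_prim F)

lemma ψ_conj (a : F) : (starRingEnd ℂ) (ψ F a) = ψ F (-a) := by
  rw [AddChar.starComp_apply (Nat.pos_of_ne_zero (CharP.ringChar_ne_zero_of_finite F)),
    AddChar.inv_apply]

noncomputable def fT (X : Finset F) (u : F) : ℂ := ∑ x ∈ X, ψ F (u * x)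

lemma fT_zero (X : Finset F) : fT X 0 = (X.card : ℂ) := by
  simp [fT]

lemma parseval (X : Finset F) :
    ∑ t : F, ‖fT X t‖ ^ 2 = (Fintype.card F : ℝ) * X.card := by
  have h : ((∑ t : F, ‖fT X t‖ ^ 2 : ℝ) : ℂ) = ((Fintype.card F : ℝ) * X.card : ℝ) := by
    push_cast
    calc ∑ t : F, (‖fT X t‖ : ℂ) ^ 2
        = ∑ t : F, fT X t * (starRingEnd ℂ) (fT X t) := by
          refine sum_congr rfl fun t _ => ?_
          rw [Complex.mul_conj, ← Complex.sq_norm]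
          push_cast
          ring
      _ = ∑ t : F, ∑ x ∈ X, ∑ y ∈ X, ψ F (t * x) * ψ F (-(t * y)) := by
          refine sum_congr rfl fun t _ => ?_
          simp only [fT]
          rw [map_sum (starRingEnd ℂ), Finset.sum_mul_sum]
          simp_rw [ψ_conj]
      _ = ∑ x ∈ X, ∑ y ∈ X, ∑ t : F, ψ F (t * (x - y)) := by
          rw [Finset.sum_comm]
          refine sum_congr rfl fun x _ => ?_
          rw [Finset.sum_comm]
          refine sum_congr rfl fun y _ => sum_congr rfl fun t _ => ?_
          rw [← AddChar.map_add_eq_mul]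
          congr 1
          ring
      _ = ∑ x ∈ X, ∑ y ∈ X, if x - y = 0 then (Fintype.card F : ℂ) else 0 := by
          exact sum_congr rfl fun x _ => sum_congr rfl fun y _ => ψ_sum _
      _ = (Fintype.card F : ℂ) * X.card := by
          simp_rw [sub_eq_zero, Finset.sum_ite_eq]
          simp [mul_comm]
  exact_mod_cast h

lemma sum_norm_sq_le (X : Finset F) (T : Finset F) (g : F → F) (hg : Set.InjOn g T) :
    ∑ t ∈ T, ‖fT X (g t)‖ ^ 2 ≤ (Fintype.card F : ℝ) * X.card := by
  have h1 : ∑ u ∈ T.image g, ‖fT X u‖ ^ 2 = ∑ t ∈ T, ‖fT X (g t)‖ ^ 2 :=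
    Finset.sum_image fun x hx y hy h => hg (Finset.mem_coe.2 hx) (Finset.mem_coe.2 hy) h
  rw [← h1, ← parseval X]
  exact Finset.sum_le_sum_of_subset_of_nonneg (Finset.subset_univ _)
    (fun i _ _ => by positivity)

/-- Number of solutions of `(s - a₃) * a₂ = p`. -/
noncomputable def solCount (S A₃ A₂ P : Finset F) : ℕ :=
  (((A₂ ×ˢ (S ×ˢ A₃)) ×ˢ P).filter fun x => (x.1.2.1 - x.1.2.2) * x.1.1 = x.2).card

lemma le_solCount (A₁ A₂ A₃ : Finset F) :
    A₁.card * A₂.card * A₃.card ≤ solCount (A₁ + A₃) A₃ A₂ (A₁ * A₂) := by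
  have h := Finset.card_le_card_of_injOn
    (f := fun x : F × F × F => ((x.2.1, (x.1 + x.2.2, x.2.2)), x.1 * x.2.1))
    (s := A₁ ×ˢ A₂ ×ˢ A₃)
    (t := ((A₂ ×ˢ ((A₁ + A₃) ×ˢ A₃)) ×ˢ (A₁ * A₂)).filter
      fun x => (x.1.2.1 - x.1.2.2) * x.1.1 = x.2)
    (by
      rintro ⟨a₁, a₂, a₃⟩ hx
      simp only [Finset.mem_coe, Finset.mem_product] at hx
      obtain ⟨h1, h2, h3⟩ := hx
      simp only [Finset.mem_coe, Finset.mem_filter, Finset.mem_product]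
      refine ⟨⟨⟨h2, Finset.add_mem_add h1 h3, h3⟩, Finset.mul_mem_mul h1 h2⟩, ?_⟩
      ring)
    (by
      rintro ⟨a₁, a₂, a₃⟩ - ⟨b₁, b₂, b₃⟩ - h
      simp only [Prod.mk.injEq] at h
      obtain ⟨⟨h2, hs, h3⟩, -⟩ := h
      have h1 : a₁ = b₁ := by rw [h3] at hs; exact add_right_cancel hs
      simp [h1, h2, h3, Prod.ext_iff])
  simpa [solCount, Finset.card_product, mul_assoc] using h

lemma key_identity (S A₃ A₂ P : Finset F) :
    (Fintype.card F : ℂ) * solCount S A₃ A₂ P =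
      ∑ t : F, ∑ a₂ ∈ A₂, fT S (t * a₂) * (fT A₃ (-(t * a₂)) * fT P (-t)) := by
  have hN : (solCount S A₃ A₂ P : ℂ) =
      ∑ x ∈ (A₂ ×ˢ (S ×ˢ A₃)) ×ˢ P,
        if (x.1.2.1 - x.1.2.2) * x.1.1 - x.2 = 0 then 1 else 0 := by
    rw [solCount, Finset.card_filter]
    push_cast
    refine sum_congr rfl fun x _ => ?_
    simp [sub_eq_zero]
  calc (Fintype.card F : ℂ) * solCount S A₃ A₂ P
      = ∑ x ∈ (A₂ ×ˢ (S ×ˢ A₃)) ×ˢ P,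
          if (x.1.2.1 - x.1.2.2) * x.1.1 - x.2 = 0 then (Fintype.card F : ℂ) else 0 := by
        rw [hN, Finset.mul_sum]
        exact sum_congr rfl fun x _ => by rw [mul_ite, mul_one, mul_zero]
    _ = ∑ a₂ ∈ A₂, ∑ s ∈ S, ∑ a₃ ∈ A₃, ∑ p ∈ P,
          if (s - a₃) * a₂ - p = 0 then (Fintype.card F : ℂ) else 0 := by
        simp only [Finset.sum_product]
    _ = ∑ a₂ ∈ A₂, ∑ s ∈ S, ∑ a₃ ∈ A₃, ∑ p ∈ P, ∑ t : F,
          ψ F (t * ((s - a₃) * a₂ - p)) := by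
        exact sum_congr rfl fun _ _ => sum_congr rfl fun _ _ => sum_congr rfl fun _ _ =>
          sum_congr rfl fun _ _ => (ψ_sum _).symm
    _ = ∑ a₂ ∈ A₂, ∑ s ∈ S, ∑ a₃ ∈ A₃, ∑ t : F, ∑ p ∈ P,
          ψ F (t * ((s - a₃) * a₂ - p)) :=
        sum_congr rfl fun _ _ => sum_congr rfl fun _ _ => sum_congr rfl fun _ _ =>
          Finset.sum_comm
    _ = ∑ a₂ ∈ A₂, ∑ s ∈ S, ∑ t : F, ∑ a₃ ∈ A₃, ∑ p ∈ P,
          ψ F (t * ((s - a₃) * a₂ - p)) :=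
        sum_congr rfl fun _ _ => sum_congr rfl fun _ _ => Finset.sum_comm
    _ = ∑ a₂ ∈ A₂, ∑ t : F, ∑ s ∈ S, ∑ a₃ ∈ A₃, ∑ p ∈ P,
          ψ F (t * ((s - a₃) * a₂ - p)) :=
        sum_congr rfl fun _ _ => Finset.sum_comm
    _ = ∑ t : F, ∑ a₂ ∈ A₂, ∑ s ∈ S, ∑ a₃ ∈ A₃, ∑ p ∈ P,
          ψ F (t * ((s - a₃) * a₂ - p)) := Finset.sum_comm
    _ = ∑ t : F, ∑ a₂ ∈ A₂, fT S (t * a₂) * (fT A₃ (-(t * a₂)) * fT P (-t)) := by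
        refine sum_congr rfl fun t _ => sum_congr rfl fun a₂ _ => Eq.symm ?_
        simp only [fT]
        rw [Finset.sum_mul]
        refine sum_congr rfl fun s _ => ?_
        rw [Finset.sum_mul]
        rw [Finset.mul_sum]
        refine sum_congr rfl fun a₃ _ => ?_
        rw [Finset.mul_sum, Finset.mul_sum]
        refine sum_congr rfl fun p _ => ?_
        rw [← AddChar.map_add_eq_mul, ← AddChar.map_add_eq_mul]
        congr 1
        ring


set_option maxHeartbeats 1000000 in
lemma key_bound (S A₃ A₂ P : Finset F) (hA₂ : (0 : F) ∉ A₂) :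
    (Fintype.card F : ℝ) * solCount S A₃ A₂ P ≤
      (P.card : ℝ) * S.card * A₂.card * A₃.card +
        Real.sqrt ((Fintype.card F : ℝ) ^ 3 *
          ((P.card : ℝ) * S.card * A₂.card * A₃.card)) := by
  set q : ℝ := (Fintype.card F : ℝ) with hq
  have hq0 : 0 ≤ q := by positivity
  set g : F → ℂ := fun t => ∑ a₂ ∈ A₂, fT S (t * a₂) * (fT A₃ (-(t * a₂)) * fT P (-t)) with hgdef
  have hid : (Fintype.card F : ℂ) * solCount S A₃ A₂ P = ∑ t : F, g t := key_identity S A₃ A₂ P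
  have hsplit : ∑ t : F, g t = g 0 + ∑ t ∈ (univ : Finset F).erase 0, g t :=
    (Finset.add_sum_erase univ g (mem_univ 0)).symm
  have hg0 : g 0 = (A₂.card : ℂ) * (S.card * (A₃.card * P.card)) := by
    simp [hgdef, fT_zero]
  set MT : ℝ := (P.card : ℝ) * S.card * A₂.card * A₃.card with hMT
  set W : ℝ := ∑ t ∈ (univ : Finset F).erase 0, ∑ a₂ ∈ A₂,
      ‖fT S (t * a₂)‖ * (‖fT A₃ (-(t * a₂))‖ * ‖fT P (-t)‖) with hW
  -- step 1: q * N ≤ MT + W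
  have step1 : q * solCount S A₃ A₂ P ≤ MT + W := by
    have h2 : ((q * solCount S A₃ A₂ P - MT : ℝ) : ℂ) = ∑ t ∈ (univ : Finset F).erase 0, g t := by
      push_cast [hq, hMT]
      rw [hid, hsplit, hg0]
      ring
    have h3 : q * solCount S A₃ A₂ P - MT ≤ ‖∑ t ∈ (univ : Finset F).erase 0, g t‖ := by
      calc q * solCount S A₃ A₂ P - MT
          = (((q * solCount S A₃ A₂ P - MT : ℝ) : ℂ)).re := (Complex.ofReal_re _).symm
        _ = (∑ t ∈ (univ : Finset F).erase 0, g t).re := by rw [h2]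
        _ ≤ ‖∑ t ∈ (univ : Finset F).erase 0, g t‖ := by
            exact Complex.re_le_norm _
    have h4 : ‖∑ t ∈ (univ : Finset F).erase 0, g t‖ ≤ W := by
      refine (norm_sum_le _ _).trans ?_
      refine Finset.sum_le_sum fun t _ => ?_
      refine (norm_sum_le _ _).trans ?_
      refine le_of_eq (Finset.sum_congr rfl fun a₂ _ => ?_)
      rw [norm_mul, norm_mul]
    linarith
  -- step 2: W ^ 2 ≤ q ^ 3 * MT
  have step2 : W ^ 2 ≤ q ^ 3 * MT := by
    have hWprod : W = ∑ x ∈ ((univ : Finset F).erase 0) ×ˢ A₂,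
        ‖fT S (x.1 * x.2)‖ * (‖fT A₃ (-(x.1 * x.2))‖ * ‖fT P (-x.1)‖) := by
      rw [Finset.sum_product]
    have hCS := sum_mul_sq_le_sq_mul_sq (((univ : Finset F).erase 0) ×ˢ A₂)
      (fun x => ‖fT S (x.1 * x.2)‖) (fun x => ‖fT A₃ (-(x.1 * x.2))‖ * ‖fT P (-x.1)‖)
    rw [hWprod]
    refine le_trans hCS ?_
    have hB1 : ∑ x ∈ ((univ : Finset F).erase 0) ×ˢ A₂, ‖fT S (x.1 * x.2)‖ ^ 2
        ≤ A₂.card * (q * S.card) := by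
      rw [Finset.sum_product, Finset.sum_comm]
      calc ∑ a₂ ∈ A₂, ∑ t ∈ (univ : Finset F).erase 0, ‖fT S (t * a₂)‖ ^ 2
          ≤ ∑ _a₂ ∈ A₂, q * S.card := by
            refine Finset.sum_le_sum fun a₂ ha₂ => ?_
            have ha₂0 : a₂ ≠ 0 := fun h => hA₂ (h ▸ ha₂)
            exact sum_norm_sq_le S _ (fun t => t * a₂)
              (fun x _ y _ h => mul_right_cancel₀ ha₂0 h)
        _ = A₂.card * (q * S.card) := by rw [Finset.sum_const, nsmul_eq_mul]
    have hB2 : ∑ x ∈ ((univ : Finset F).erase 0) ×ˢ A₂,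
        (‖fT A₃ (-(x.1 * x.2))‖ * ‖fT P (-x.1)‖) ^ 2
        ≤ q * A₃.card * (q * P.card) := by
      rw [Finset.sum_product]
      calc ∑ t ∈ (univ : Finset F).erase 0, ∑ a₂ ∈ A₂,
            (‖fT A₃ (-(t * a₂))‖ * ‖fT P (-t)‖) ^ 2
          = ∑ t ∈ (univ : Finset F).erase 0,
              (∑ a₂ ∈ A₂, ‖fT A₃ (-(t * a₂))‖ ^ 2) * ‖fT P (-t)‖ ^ 2 := by
            refine Finset.sum_congr rfl fun t _ => ?_
            rw [Finset.sum_mul]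
            exact Finset.sum_congr rfl fun a₂ _ => by ring
        _ ≤ ∑ t ∈ (univ : Finset F).erase 0, (q * A₃.card) * ‖fT P (-t)‖ ^ 2 := by
            refine Finset.sum_le_sum fun t ht => ?_
            have ht0 : t ≠ 0 := (Finset.mem_erase.1 ht).1
            refine mul_le_mul_of_nonneg_right ?_ (by positivity)
            exact sum_norm_sq_le A₃ _ (fun a₂ => -(t * a₂))
              (fun x _ y _ h => by
                have := neg_injective h
                exact mul_left_cancel₀ ht0 this)
        _ = (q * A₃.card) * ∑ t ∈ (univ : Finset F).erase 0, ‖fT P (-t)‖ ^ 2 := by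
            rw [Finset.mul_sum]
        _ ≤ (q * A₃.card) * (q * P.card) := by
            refine mul_le_mul_of_nonneg_left ?_ (by positivity)
            exact sum_norm_sq_le P _ (fun t => -t) (fun x _ y _ h => neg_injective h)
        _ = q * A₃.card * (q * P.card) := rfl
    calc (∑ x ∈ ((univ : Finset F).erase 0) ×ˢ A₂, ‖fT S (x.1 * x.2)‖ ^ 2) *
          ∑ x ∈ ((univ : Finset F).erase 0) ×ˢ A₂,
            (‖fT A₃ (-(x.1 * x.2))‖ * ‖fT P (-x.1)‖) ^ 2
        ≤ (A₂.card * (q * S.card)) * (q * A₃.card * (q * P.card)) := by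
          refine mul_le_mul hB1 hB2 (Finset.sum_nonneg fun x _ => by positivity)
            (by positivity)
      _ = q ^ 3 * MT := by rw [hMT]; ring
  -- conclude
  have hWnn : 0 ≤ W := by
    rw [hW]
    refine Finset.sum_nonneg fun t _ => Finset.sum_nonneg fun a₂ _ => by positivity
  have hWle : W ≤ Real.sqrt (q ^ 3 * MT) := by
    rw [← Real.sqrt_sq hWnn]
    exact Real.sqrt_le_sqrt step2
  calc q * solCount S A₃ A₂ P ≤ MT + W := step1
    _ ≤ MT + Real.sqrt (q ^ 3 * MT) := by linarith


end GaraevAux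
end GaraevAux

open GaraevAux in
set_option maxHeartbeats 1000000 in
/-- **Garaev.** There is an absolute `c > 0` such that for every finite
field `F_q`, nonempty `A₁, A₂ ⊆ F_q^*` and nonempty `A₃ ⊆ F_q`,
`max(|A₁·A₂|, |A₁+A₃|) ≥ c·min(√(|A₁|q), √(|A₁|²|A₂||A₃|/q))`. -/
theorem sum_product_garaev :
    ∃ c : ℝ, 0 < c ∧
      ∀ (F : Type) [Field F] [Fintype F] [DecidableEq F] (A₁ A₂ A₃ : Finset F),
        A₁.Nonempty → A₂.Nonempty → A₃.Nonempty →
        (0 : F) ∉ A₁ → (0 : F) ∉ A₂ →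
        c * min (Real.sqrt ((A₁.card : ℝ) * (Fintype.card F : ℝ)))
            (Real.sqrt ((A₁.card : ℝ) ^ 2 * (A₂.card : ℝ) * (A₃.card : ℝ)
              / (Fintype.card F : ℝ)))
          ≤ max (((A₁ * A₂).card : ℝ)) (((A₁ + A₃).card : ℝ)) := by
  refine ⟨1/2, by norm_num, ?_⟩
  intro F _ _ _ A₁ A₂ A₃ h₁ h₂ h₃ h01 h02
  set q : ℝ := (Fintype.card F : ℝ) with hqdef
  have hq : (0 : ℝ) < q := by
    have : 0 < Fintype.card F := Fintype.card_pos
    positivity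
  set a : ℝ := (A₁.card : ℝ) with hadef
  set b : ℝ := (A₂.card : ℝ) with hbdef
  set d : ℝ := (A₃.card : ℝ) with hddef
  have ha : (0 : ℝ) < a := by rw [hadef]; exact_mod_cast Finset.card_pos.2 h₁
  have hb : (0 : ℝ) < b := by rw [hbdef]; exact_mod_cast Finset.card_pos.2 h₂
  have hd : (0 : ℝ) < d := by rw [hddef]; exact_mod_cast Finset.card_pos.2 h₃
  set K : ℝ := max (((A₁ * A₂).card : ℝ)) (((A₁ + A₃).card : ℝ)) with hKdef
  have hK0 : (0 : ℝ) ≤ K := le_trans (Nat.cast_nonneg _) (le_max_left _ _)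
  have hPK : (((A₁ * A₂).card : ℝ)) ≤ K := le_max_left _ _
  have hSK : (((A₁ + A₃).card : ℝ)) ≤ K := le_max_right _ _
  have hPnn : (0 : ℝ) ≤ ((A₁ * A₂).card : ℝ) := Nat.cast_nonneg _
  have hSnn : (0 : ℝ) ≤ ((A₁ + A₃).card : ℝ) := Nat.cast_nonneg _
  -- main inequality
  have main : q * (a * b * d) ≤ K ^ 2 * (b * d) + K * Real.sqrt (q ^ 3 * (b * d)) := by
    have h1 : (a * b * d : ℝ) ≤ (solCount (A₁ + A₃) A₃ A₂ (A₁ * A₂) : ℝ) := by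
      rw [hadef, hbdef, hddef]
      exact_mod_cast le_solCount A₁ A₂ A₃
    have h2 := key_bound (A₁ + A₃) A₃ A₂ (A₁ * A₂) h02
    have h3 : q * (a * b * d) ≤ q * (solCount (A₁ + A₃) A₃ A₂ (A₁ * A₂) : ℝ) :=
      mul_le_mul_of_nonneg_left h1 hq.le
    have hPS : ((A₁ * A₂).card : ℝ) * ((A₁ + A₃).card : ℝ) ≤ K ^ 2 := by
      nlinarith [mul_le_mul hPK hSK hSnn hK0]
    have h4 : ((A₁ * A₂).card : ℝ) * ((A₁ + A₃).card : ℝ) * b * d ≤ K ^ 2 * (b * d) := by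
      have h4' := mul_le_mul_of_nonneg_right hPS (mul_pos hb hd).le
      nlinarith [h4']
    have h5 : Real.sqrt (q ^ 3 * (((A₁ * A₂).card : ℝ) * ((A₁ + A₃).card : ℝ) * b * d))
        ≤ K * Real.sqrt (q ^ 3 * (b * d)) := by
      have h6 : q ^ 3 * (((A₁ * A₂).card : ℝ) * ((A₁ + A₃).card : ℝ) * b * d)
          ≤ (q ^ 3 * (b * d)) * K ^ 2 := by
        have h6' := mul_le_mul_of_nonneg_left hPS (by positivity : (0:ℝ) ≤ q ^ 3 * (b * d))
        nlinarith [h6']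
      calc Real.sqrt (q ^ 3 * (((A₁ * A₂).card : ℝ) * ((A₁ + A₃).card : ℝ) * b * d))
          ≤ Real.sqrt ((q ^ 3 * (b * d)) * K ^ 2) := Real.sqrt_le_sqrt h6
        _ = Real.sqrt (q ^ 3 * (b * d)) * Real.sqrt (K ^ 2) :=
            Real.sqrt_mul (by positivity) _
        _ = K * Real.sqrt (q ^ 3 * (b * d)) := by rw [Real.sqrt_sq hK0, mul_comm]
    linarith
  -- case split
  by_cases hcase : q * (a * b * d) / 2 ≤ K ^ 2 * (b * d)
  · -- K² ≥ q a / 2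
    have hKsq : q * a / 2 ≤ K ^ 2 := by
      have hpos : (0 : ℝ) < b * d := by positivity
      have : (q * a / 2) * (b * d) ≤ K ^ 2 * (b * d) := by linarith [hcase]
      exact le_of_mul_le_mul_right this hpos
    have hsq : Real.sqrt (a * q) ≤ 2 * K := by
      have : a * q ≤ (2 * K) ^ 2 := by nlinarith [hKsq, sq_nonneg K]
      calc Real.sqrt (a * q) ≤ Real.sqrt ((2 * K) ^ 2) := Real.sqrt_le_sqrt this
        _ = 2 * K := Real.sqrt_sq (by linarith)
    calc (1/2 : ℝ) * min (Real.sqrt (a * q)) (Real.sqrt (a ^ 2 * b * d / q))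
        ≤ (1/2 : ℝ) * Real.sqrt (a * q) := by
          have := min_le_left (Real.sqrt (a * q)) (Real.sqrt (a ^ 2 * b * d / q))
          linarith
      _ ≤ K := by linarith
  · -- the sqrt term dominates
    push_neg at hcase
    have hdom : q * (a * b * d) / 2 ≤ K * Real.sqrt (q ^ 3 * (b * d)) := by linarith
    have hsq2 : (q * (a * b * d) / 2) ^ 2 ≤ K ^ 2 * (q ^ 3 * (b * d)) := by
      have h7 : (q * (a * b * d) / 2) ^ 2 ≤ (K * Real.sqrt (q ^ 3 * (b * d))) ^ 2 := by
        have hLnn : (0 : ℝ) ≤ q * (a * b * d) / 2 := by positivity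
        exact pow_le_pow_left₀ hLnn hdom 2
      have h8 : (K * Real.sqrt (q ^ 3 * (b * d))) ^ 2 = K ^ 2 * (q ^ 3 * (b * d)) := by
        rw [mul_pow, Real.sq_sqrt (by positivity)]
      linarith [h7, h8.le]
    have hKsq : a ^ 2 * b * d / q ≤ 4 * K ^ 2 := by
      rw [div_le_iff₀ hq]
      have hpos : (0 : ℝ) < q ^ 2 * b * d := by positivity
      have h9 : (a ^ 2 * b * d) * (q ^ 2 * b * d) ≤ (4 * K ^ 2 * q) * (q ^ 2 * b * d) := by
        nlinarith [hsq2]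

      exact le_of_mul_le_mul_right h9 hpos
    have hsq : Real.sqrt (a ^ 2 * b * d / q) ≤ 2 * K := by
      have : a ^ 2 * b * d / q ≤ (2 * K) ^ 2 := by nlinarith
      calc Real.sqrt (a ^ 2 * b * d / q) ≤ Real.sqrt ((2 * K) ^ 2) := Real.sqrt_le_sqrt this
        _ = 2 * K := Real.sqrt_sq (by linarith)
    calc (1/2 : ℝ) * min (Real.sqrt (a * q)) (Real.sqrt (a ^ 2 * b * d / q))
        ≤ (1/2 : ℝ) * Real.sqrt (a ^ 2 * b * d / q) := by
          have := min_le_right (Real.sqrt (a * q)) (Real.sqrt (a ^ 2 * b * d / q))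
          linarith
      _ ≤ K := by linarith
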